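/- Let β, r, θ, c > 0 with β > r and β c < β - 2r. Then the cubic f(u) = β c u³ - β u + 2r has exactly one zero û₁ in the open interval (0,1), Ψ₂ attains a local maximum at û₁, and: if θ = Ψ₂(û₁) then the equation Ψ₂(u) = θ has exactly one solution in (0,1) (a unique positive fixed point of V₂); if (β - r)(1 + c) < θ < Ψ₂(û₁) then the equation Ψ₂(u) = θ has exactly two solutions in (0,1) (two positive fixed points of V₂). -/

import Mathlib

/-- The map `V₂(u,v) = (u(2-u) - u v, β u v + (1-r) v - θ u² v/(1 + c u²))`. -/
noncomputable def V2 (β r θ c : ℝ) (p : ℝ × ℝ) : ℝ × ℝ :=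
  (p.1 * (2 - p.1) - p.1 * p.2,
   β * p.1 * p.2 + (1 - r) * p.2 - θ * p.1 ^ 2 * p.2 / (1 + c * p.1 ^ 2))

/-- `Ψ₂(u) = (βu - r)(1 + cu²)/u²`. -/
noncomputable def Psi2 (β r c u : ℝ) : ℝ := (β * u - r) * (1 + c * u ^ 2) / u ^ 2

/-- The cubic `f(u) = βcu³ - βu + 2r`. -/
noncomputable def fcub (β r c u : ℝ) : ℝ := β * c * u ^ 3 - β * u + 2 * r

lemma psi2_hasDerivAt (β r c u : ℝ) (hu : u ≠ 0) :
    HasDerivAt (Psi2 β r c) (fcub β r c u / u ^ 3) u := by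
  have h1 : HasDerivAt (fun u : ℝ => (β * u - r) * (1 + c * u ^ 2))
      (β * (1 + c * u ^ 2) + (β * u - r) * (2 * c * u)) u := by
    have h := (((hasDerivAt_id u).const_mul β).sub_const r).mul
      (((hasDerivAt_pow 2 u).const_mul c).const_add 1)
    simp only [id_eq] at h
    refine h.congr_deriv ?_
    push_cast
    ring
  have h2 : HasDerivAt (fun u : ℝ => u ^ 2) (2 * u) u := by
    simpa using hasDerivAt_pow 2 u
  have h3 := h1.div h2 (pow_ne_zero 2 hu)
  refine h3.congr_deriv ?_
  unfold fcub
  field_simp [fcub]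
  ring

lemma psi2_contOn (β r c : ℝ) {s : Set ℝ} (hs : ∀ x ∈ s, x ≠ 0) :
    ContinuousOn (Psi2 β r c) s := fun x hx =>
  (psi2_hasDerivAt β r c x (hs x hx)).continuousAt.continuousWithinAt

lemma fcub_sign {β r c : ℝ} (hβ : 0 < β) (hr : 0 < r) (hc : 0 < c)
    (hf1 : β * c < β - 2 * r)
    (u1 : ℝ) (h1 : u1 ∈ Set.Ioo (0 : ℝ) 1) (hz : fcub β r c u1 = 0)
    (u : ℝ) (hu0 : 0 < u) (hu1 : u < 1) :
    (u < u1 → 0 < fcub β r c u) ∧ (u1 < u → fcub β r c u < 0) := by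
  obtain ⟨hu1p, hu1l⟩ := h1
  have hz' : β * c * u1 ^ 3 - β * u1 + 2 * r = 0 := hz
  have key : (1 - u1) * (β * c * (1 + u1 + u1 ^ 2) - β) = β * c - β + 2 * r := by
    linear_combination -hz'
  have hg1 : β * c * (1 + u1 + u1 ^ 2) - β < 0 := by
    by_contra h
    push_neg at h
    have h2 : 0 ≤ (1 - u1) * (β * c * (1 + u1 + u1 ^ 2) - β) :=
      mul_nonneg (by linarith) h
    rw [key] at h2
    linarith
  have hsplit : β * c * (u ^ 2 + u * u1 + u1 ^ 2) - β =
      (β * c * (1 + u1 + u1 ^ 2) - β) - β * c * ((1 - u) * (u + 1 + u1)) := by ring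
  have hprod : 0 < β * c * ((1 - u) * (u + 1 + u1)) := by
    have : 0 < (1 - u) * (u + 1 + u1) := mul_pos (by linarith) (by linarith)
    positivity
  have hgu : β * c * (u ^ 2 + u * u1 + u1 ^ 2) - β < 0 := by
    rw [hsplit]; linarith
  have hfac : fcub β r c u = (u - u1) * (β * c * (u ^ 2 + u * u1 + u1 ^ 2) - β) := by
    show β * c * u ^ 3 - β * u + 2 * r = _
    linear_combination hz'
  constructor
  · intro h
    rw [hfac]
    exact mul_pos_of_neg_of_neg (by linarith) hgu
  · intro h
    rw [hfac]
    exact mul_neg_of_pos_of_neg (by linarith) hgu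

lemma psi2_mono {β r c : ℝ} (hβ : 0 < β) (hr : 0 < r) (hc : 0 < c)
    (hf1 : β * c < β - 2 * r)
    (u1 : ℝ) (h1 : u1 ∈ Set.Ioo (0 : ℝ) 1) (hz : fcub β r c u1 = 0) :
    StrictMonoOn (Psi2 β r c) (Set.Ioc 0 u1) := by
  apply strictMonoOn_of_deriv_pos (convex_Ioc 0 u1)
  · exact psi2_contOn β r c (fun x hx => ne_of_gt hx.1)
  · intro x hx
    rw [interior_Ioc] at hx
    rw [(psi2_hasDerivAt β r c x (ne_of_gt hx.1)).deriv]
    have hx1 : x < 1 := hx.2.trans h1.2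
    have hpos := (fcub_sign hβ hr hc hf1 u1 h1 hz x hx.1 hx1).1 hx.2
    exact div_pos hpos (pow_pos hx.1 3)

lemma psi2_anti {β r c : ℝ} (hβ : 0 < β) (hr : 0 < r) (hc : 0 < c)
    (hf1 : β * c < β - 2 * r)
    (u1 : ℝ) (h1 : u1 ∈ Set.Ioo (0 : ℝ) 1) (hz : fcub β r c u1 = 0) :
    StrictAntiOn (Psi2 β r c) (Set.Ico u1 1) := by
  apply strictAntiOn_of_deriv_neg (convex_Ico u1 1)
  · exact psi2_contOn β r c (fun x hx => ne_of_gt (lt_of_lt_of_le h1.1 hx.1))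
  · intro x hx
    rw [interior_Ico] at hx
    have hx0 : 0 < x := h1.1.trans hx.1
    rw [(psi2_hasDerivAt β r c x (ne_of_gt hx0)).deriv]
    have hneg := (fcub_sign hβ hr hc hf1 u1 h1 hz x hx0 hx.2).2 hx.1
    exact div_neg_of_neg_of_pos hneg (pow_pos hx0 3)

lemma psi2_one (β r c : ℝ) : Psi2 β r c 1 = (β - r) * (1 + c) := by
  simp [Psi2]

lemma fixed_iff (β r θ c : ℝ) (hc : 0 < c) (p : ℝ × ℝ) (hu : 0 < p.1) (hv : 0 < p.2) :
    V2 β r θ c p = p ↔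
      (p.2 = 1 - p.1 ∧ p.1 ∈ Set.Ioo (0 : ℝ) 1 ∧ Psi2 β r c p.1 = θ) := by
  obtain ⟨u, v⟩ := p
  simp only [V2, Prod.mk.injEq, Set.mem_Ioo] at *
  have hD : 0 < 1 + c * u ^ 2 := by positivity
  have hu2 : (u : ℝ) ^ 2 ≠ 0 := pow_ne_zero 2 (ne_of_gt hu)
  constructor
  · rintro ⟨e1, e2⟩
    have hv' : v = 1 - u := by
      have h0 : u * (1 - u - v) = 0 := by linear_combination e1
      rcases mul_eq_zero.1 h0 with h | h
      · exact absurd h (ne_of_gt hu)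
      · linarith
    have hu1 : u < 1 := by rw [hv'] at hv; linarith
    refine ⟨hv', ⟨hu, hu1⟩, ?_⟩
    have e2' : β * u * v * (1 + c * u ^ 2) + (1 - r) * v * (1 + c * u ^ 2)
        - θ * u ^ 2 * v = v * (1 + c * u ^ 2) := by
      field_simp at e2
      linear_combination v * e2
    have keyv : ((β * u - r) * (1 + c * u ^ 2) - θ * u ^ 2) * v = 0 := by
      linear_combination e2'
    have hkey : (β * u - r) * (1 + c * u ^ 2) = θ * u ^ 2 := by
      rcases mul_eq_zero.1 keyv with h | h
      · linarith
      · exact absurd h (ne_of_gt hv)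
    rw [Psi2, div_eq_iff hu2]
    linarith
  · rintro ⟨hv', ⟨_, hu1⟩, hpsi⟩
    subst hv'
    have hkey : (β * u - r) * (1 + c * u ^ 2) = θ * u ^ 2 := by
      rw [Psi2, div_eq_iff hu2] at hpsi
      linarith
    constructor
    · ring
    · field_simp
      linear_combination hkey

/-- If `β > r` and `βc < β - 2r`, then `f` has exactly one zero `û₁ ∈ (0,1)`, `Ψ₂`
has a local maximum at `û₁`, and:  if `θ = Ψ₂(û₁)` then `Ψ₂(u) = θ` has exactly one
solution in `(0,1)` (a unique positive fixed point of `V₂`); if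
`(β-r)(1+c) < θ < Ψ₂(û₁)` then it has exactly two solutions in `(0,1)`
(two positive fixed points of `V₂`). -/
theorem one_or_two_positive_fixed_points_V2 (β r θ c : ℝ) (hβ : 0 < β) (hr : 0 < r)
    (hθ : 0 < θ) (hc : 0 < c) (hβr : r < β) (hf1 : β * c < β - 2 * r) :
    (∃! u : ℝ, u ∈ Set.Ioo (0 : ℝ) 1 ∧ fcub β r c u = 0) ∧
    (∀ u1 : ℝ, u1 ∈ Set.Ioo (0 : ℝ) 1 → fcub β r c u1 = 0 →
      IsLocalMax (Psi2 β r c) u1 ∧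
      (θ = Psi2 β r c u1 →
        (∃! u : ℝ, u ∈ Set.Ioo (0 : ℝ) 1 ∧ Psi2 β r c u = θ) ∧
        (∃! p : ℝ × ℝ, 0 < p.1 ∧ 0 < p.2 ∧ V2 β r θ c p = p)) ∧
      ((β - r) * (1 + c) < θ → θ < Psi2 β r c u1 →
        {u : ℝ | u ∈ Set.Ioo (0 : ℝ) 1 ∧ Psi2 β r c u = θ}.ncard = 2 ∧
        {p : ℝ × ℝ | 0 < p.1 ∧ 0 < p.2 ∧ V2 β r θ c p = p}.ncard = 2)) := by
  have hfc : Continuous (fcub β r c) := by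
    unfold fcub; fun_prop
  have hf0 : fcub β r c 0 = 2 * r := by simp [fcub]
  have hfone : fcub β r c 1 = β * c - β + 2 * r := by norm_num [fcub]
  -- existence of a zero in (0,1)
  have hex : ∃ u ∈ Set.Ioo (0 : ℝ) 1, fcub β r c u = 0 := by
    have h := intermediate_value_Ioo' (le_of_lt one_pos) hfc.continuousOn
      (a := (0 : ℝ)) (b := 1)
    have h0 : (0 : ℝ) ∈ Set.Ioo (fcub β r c 1) (fcub β r c 0) := by
      rw [hf0, hfone]; constructor <;> linarith
    obtain ⟨u, hu, hfu⟩ := h h0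
    exact ⟨u, hu, hfu⟩
  obtain ⟨w, hw, hfw⟩ := hex
  have huniq : ∀ y ∈ Set.Ioo (0 : ℝ) 1, fcub β r c y = 0 → y = w := by
    intro y hy hfy
    rcases lt_trichotomy y w with h | h | h
    · have := (fcub_sign hβ hr hc hf1 w hw hfw y hy.1 hy.2).1 h
      linarith [this, hfy.le]
    · exact h
    · have := (fcub_sign hβ hr hc hf1 w hw hfw y hy.1 hy.2).2 h
      linarith [this, hfy.ge]
  refine ⟨⟨w, ⟨hw, hfw⟩, fun y hy => huniq y hy.1 hy.2⟩, ?_⟩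
  intro u1 h1 hz
  have mono := psi2_mono hβ hr hc hf1 u1 h1 hz
  have anti := psi2_anti hβ hr hc hf1 u1 h1 hz
  have hmax : IsLocalMax (Psi2 β r c) u1 := by
    filter_upwards [isOpen_Ioo.mem_nhds h1] with u hu
    rcases le_total u u1 with h | h
    · exact mono.monotoneOn ⟨hu.1, h⟩ ⟨h1.1, le_refl u1⟩ h
    · exact anti.antitoneOn ⟨le_refl u1, h1.2⟩ ⟨h, hu.2⟩ h
  refine ⟨hmax, ?_, ?_⟩
  · -- case θ = Psi2 u1
    intro hθ1
    have huniqS : ∀ u ∈ Set.Ioo (0 : ℝ) 1, Psi2 β r c u = θ → u = u1 := by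
      intro u hu hpu
      rcases lt_trichotomy u u1 with h | h | h
      · have := mono ⟨hu.1, h.le⟩ ⟨h1.1, le_refl u1⟩ h
        rw [hpu, ← hθ1] at this; linarith
      · exact h
      · have := anti ⟨le_refl u1, h1.2⟩ ⟨h.le, hu.2⟩ h
        rw [hpu, ← hθ1] at this; linarith
    constructor
    · exact ⟨u1, ⟨h1, hθ1.symm⟩, fun y hy => huniqS y hy.1 hy.2⟩
    · refine ⟨(u1, 1 - u1), ⟨h1.1, by show (0:ℝ) < 1 - u1; linarith [h1.2], ?_⟩, ?_⟩
      · exact (fixed_iff β r θ c hc (u1, 1 - u1) h1.1 (by show (0:ℝ) < 1 - u1; linarith [h1.2])).2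
          ⟨rfl, h1, hθ1.symm⟩
      · rintro q ⟨hq1, hq2, hqf⟩
        obtain ⟨hv, hio, hps⟩ := (fixed_iff β r θ c hc q hq1 hq2).1 hqf
        have : q.1 = u1 := huniqS q.1 hio hps
        have hq : q = (q.1, q.2) := rfl
        rw [hq, this, hv, this]
  · -- case two solutions
    intro hlo hhi
    have hP1 : 0 < Psi2 β r c u1 := lt_trans hθ hhi
    have hnum : 0 < β * u1 - r := by
      by_contra h
      push_neg at h
      have h2 : (β * u1 - r) * (1 + c * u1 ^ 2) ≤ 0 :=
        mul_nonpos_of_nonpos_of_nonneg h (by positivity)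
      have h3 : Psi2 β r c u1 ≤ 0 :=
        div_nonpos_of_nonpos_of_nonneg h2 (by positivity)
      linarith
    have hrb0 : 0 < r / β := div_pos hr hβ
    have hrb1 : r / β < u1 := (div_lt_iff₀ hβ).2 (by linarith)
    have hpsirb : Psi2 β r c (r / β) = 0 := by
      have h0 : β * (r / β) - r = 0 := by field_simp; ring
      rw [Psi2, h0, zero_mul, zero_div]
    -- root in (r/β, u1)
    have hIVT1 := intermediate_value_Ioo hrb1.le
      (psi2_contOn β r c (fun x hx => ne_of_gt (lt_of_lt_of_le hrb0 hx.1)))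
    have hmem1 : θ ∈ Set.Ioo (Psi2 β r c (r / β)) (Psi2 β r c u1) := by
      rw [hpsirb]; exact ⟨hθ, hhi⟩
    obtain ⟨a, ha, hpa⟩ := hIVT1 hmem1
    have ha' : a ∈ Set.Ioo (0 : ℝ) u1 := ⟨hrb0.trans ha.1, ha.2⟩
    -- root in (u1, 1)
    have hIVT2 := intermediate_value_Ioo' h1.2.le
      (psi2_contOn β r c (fun x hx => ne_of_gt (lt_of_lt_of_le h1.1 hx.1)))
    have hmem2 : θ ∈ Set.Ioo (Psi2 β r c 1) (Psi2 β r c u1) := by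
      rw [psi2_one]; exact ⟨hlo, hhi⟩
    obtain ⟨b, hb, hpb⟩ := hIVT2 hmem2
    have hab : a ≠ b := by
      intro h; rw [h] at ha'; exact absurd hb.1 (not_lt.2 ha'.2.le)
    have haIoo : a ∈ Set.Ioo (0 : ℝ) 1 := ⟨ha'.1, ha'.2.trans h1.2⟩
    have hbIoo : b ∈ Set.Ioo (0 : ℝ) 1 := ⟨h1.1.trans hb.1, hb.2⟩
    have hSeq : {u : ℝ | u ∈ Set.Ioo (0 : ℝ) 1 ∧ Psi2 β r c u = θ} = {a, b} := by
      ext u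
      simp only [Set.mem_setOf_eq, Set.mem_insert_iff, Set.mem_singleton_iff]
      constructor
      · rintro ⟨hu, hpu⟩
        rcases lt_trichotomy u u1 with h | h | h
        · left
          exact mono.injOn ⟨hu.1, h.le⟩ ⟨ha'.1, ha'.2.le⟩ (by rw [hpu, hpa])
        · exfalso; rw [h] at hpu; linarith
        · right
          exact anti.injOn ⟨h.le, hu.2⟩ ⟨hb.1.le, hb.2⟩ (by rw [hpu, hpb])
      · rintro (rfl | rfl)
        · exact ⟨haIoo, hpa⟩
        · exact ⟨hbIoo, hpb⟩
    have hPeq : {p : ℝ × ℝ | 0 < p.1 ∧ 0 < p.2 ∧ V2 β r θ c p = p} =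
        (fun u : ℝ => (u, 1 - u)) '' {u : ℝ | u ∈ Set.Ioo (0 : ℝ) 1 ∧ Psi2 β r c u = θ} := by
      ext p
      simp only [Set.mem_setOf_eq, Set.mem_image]
      constructor
      · rintro ⟨hp1, hp2, hpf⟩
        obtain ⟨hv, hio, hps⟩ := (fixed_iff β r θ c hc p hp1 hp2).1 hpf
        exact ⟨p.1, ⟨hio, hps⟩, by rw [← hv]⟩
      · rintro ⟨u, ⟨hio, hps⟩, rfl⟩
        refine ⟨hio.1, by simp [hio.2], ?_⟩
        exact (fixed_iff β r θ c hc (u, 1 - u) hio.1 (by simp [hio.2])).2 ⟨rfl, hio, hps⟩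
    constructor
    · rw [hSeq]; exact Set.ncard_pair hab
    · rw [hPeq, Set.ncard_image_of_injective _ (fun x y h => congrArg Prod.fst h),
        hSeq]
      exact Set.ncard_pair hab
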